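/- Let a > 0 be real. For b ∈ ℂ with |b| < 1 and |a·b| < 1, let s and r be the principal square roots of 1 - b² and 1 - a²b² respectively, set x₋ := b/s - a·b/r, y₊ := 1/s + 1/r, and M_n'(b) := (i/2)·[[x₋ - 2i, y₊], [-y₊, -x₋ - 2i]]. Then det M_n'(b)/b² tends to -(1+a)²/4 as b → 0 with b ≠ 0. In particular, since -(1+a)²/4 ≠ 0 and det M_n'(0) = 0, the analytic function b ↦ det M_n'(b) has a zero of order exactly 2 at b = 0. -/

import Mathlib

open Complex Filter

/-- The principal square root of a complex number (for `Re z > 0` this is the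
unique square root with positive real part). -/
noncomputable def psqrt (z : ℂ) : ℂ := z ^ ((1 : ℂ) / 2)

/-- The matrix `M_n'(b) = (i/2)·[[x₋ - 2i, y₊],[-y₊, -x₋ - 2i]]` with
`x₋ = b/√(1-b²) - ab/√(1-a²b²)` and `y₊ = 1/√(1-b²) + 1/√(1-a²b²)`,
using the principal square roots. -/
noncomputable def Mnp (a : ℝ) (b : ℂ) : Matrix (Fin 2) (Fin 2) ℂ :=
  (Complex.I / 2) •
    !![(b / psqrt (1 - b ^ 2) - (a : ℂ) * b / psqrt (1 - (a : ℂ) ^ 2 * b ^ 2)) - 2 * Complex.I,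
       1 / psqrt (1 - b ^ 2) + 1 / psqrt (1 - (a : ℂ) ^ 2 * b ^ 2);
       -(1 / psqrt (1 - b ^ 2) + 1 / psqrt (1 - (a : ℂ) ^ 2 * b ^ 2)),
       -(b / psqrt (1 - b ^ 2) - (a : ℂ) * b / psqrt (1 - (a : ℂ) ^ 2 * b ^ 2)) - 2 * Complex.I]

lemma psqrt_sq (z : ℂ) : (psqrt z) ^ 2 = z := by
  have : ((1:ℂ)/2) = ((2:ℕ):ℂ)⁻¹ := by norm_num
  rw [psqrt, this, cpow_nat_inv_pow _ two_ne_zero]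

lemma psqrt_ne_zero' {z : ℂ} (hz : z ≠ 0) : psqrt z ≠ 0 := by
  simp [psqrt, cpow_eq_zero_iff, hz]

lemma det_Mnp (a : ℝ) (b : ℂ) :
    (Mnp a b).det =
      -(1/4) * ((1 / psqrt (1 - b ^ 2) + 1 / psqrt (1 - (a : ℂ) ^ 2 * b ^ 2)) ^ 2
        - (b / psqrt (1 - b ^ 2) - (a : ℂ) * b / psqrt (1 - (a : ℂ) ^ 2 * b ^ 2)) ^ 2 - 4) := by
  rw [Mnp, Matrix.det_smul, Matrix.det_fin_two_of]
  simp only [Fintype.card_fin]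
  set x := b / psqrt (1 - b ^ 2) - (a : ℂ) * b / psqrt (1 - (a : ℂ) ^ 2 * b ^ 2)
  set y := 1 / psqrt (1 - b ^ 2) + 1 / psqrt (1 - (a : ℂ) ^ 2 * b ^ 2)
  linear_combination ((y^2 - x^2)/4 + Complex.I^2 - 1) * Complex.I_sq

lemma key_algebra (a : ℝ) (b s r : ℂ) (hs : s ≠ 0) (hr : r ≠ 0) (hb : b ≠ 0)
    (hf : 1 + (a:ℂ) * b ^ 2 + s * r ≠ 0)
    (hs2 : s ^ 2 = 1 - b ^ 2) (hr2 : r ^ 2 = 1 - (a:ℂ) ^ 2 * b ^ 2) :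
    -((1 + (a:ℂ)) ^ 2 / (2 * s * r * (1 + (a:ℂ) * b ^ 2 + s * r)))
      = (-(1/4) * ((1 / s + 1 / r) ^ 2 - (b / s - (a:ℂ) * b / r) ^ 2 - 4)) / b ^ 2 := by
  field_simp
  linear_combination
    (-4*r^3*s - 2*(1 + (a:ℂ) * b ^ 2 + s * r)*r^2) * hs2
      + (-4*r*s*(1-b^2) - 2*(1 + (a:ℂ) * b ^ 2 + s * r)*s^2) * hr2

/-- `det M_n'(b)/b² → -(1+a)²/4` as `b → 0`, `b ≠ 0`; in particular,
since `-(1+a)²/4 ≠ 0` and `det M_n'(0) = 0`, the function `b ↦ det M_n'(b)` has a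
zero of order exactly 2 at `b = 0`. -/
theorem statement18 (a : ℝ) (ha : 0 < a) :
    Tendsto (fun b : ℂ => (Mnp a b).det / b ^ 2) (nhdsWithin 0 {(0 : ℂ)}ᶜ)
      (nhds (-((1 + (a : ℂ)) ^ 2 / 4)))
    ∧ (Mnp a 0).det = 0
    ∧ -((1 + (a : ℂ)) ^ 2 / 4) ≠ 0 := by
  have ha1 : (1 : ℂ) + (a : ℂ) ≠ 0 := by
    intro h
    have : (1 + a : ℝ) = 0 := by exact_mod_cast congrArg Complex.re h
    linarith
  set S : ℂ → ℂ := fun b => psqrt (1 - b ^ 2) with hSdef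
  set R : ℂ → ℂ := fun b => psqrt (1 - (a : ℂ) ^ 2 * b ^ 2) with hRdef
  have hc : ContinuousAt (fun z : ℂ => z ^ ((1:ℂ)/2)) 1 := continuousAt_cpow_const one_mem_slitPlane
  have hS : Tendsto S (nhds 0) (nhds 1) := by
    have h0 : Continuous (fun b : ℂ => 1 - b ^ 2) := by fun_prop
    have h1 : Tendsto (fun b : ℂ => 1 - b ^ 2) (nhds 0) (nhds 1) := by
      have := h0.tendsto (0 : ℂ); simpa using this
    have := hc.tendsto.comp h1
    simpa [psqrt, hSdef, Function.comp_def] using this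
  have hR : Tendsto R (nhds 0) (nhds 1) := by
    have h0 : Continuous (fun b : ℂ => 1 - (a:ℂ) ^ 2 * b ^ 2) := by fun_prop
    have h1 : Tendsto (fun b : ℂ => 1 - (a:ℂ) ^ 2 * b ^ 2) (nhds 0) (nhds 1) := by
      have := h0.tendsto (0 : ℂ); simpa using this
    have := hc.tendsto.comp h1
    simpa [psqrt, hRdef, Function.comp_def] using this
  have hDen : Tendsto (fun b : ℂ => 2 * S b * R b * (1 + (a:ℂ) * b ^ 2 + S b * R b))
      (nhds 0) (nhds 4) := by
    have hb2 : Tendsto (fun b : ℂ => (a:ℂ) * b ^ 2) (nhds 0) (nhds 0) := by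
      have h0 : Continuous (fun b : ℂ => (a:ℂ) * b ^ 2) := by fun_prop
      have := h0.tendsto (0 : ℂ); simpa using this
    have h1 : Tendsto (fun b : ℂ => 1 + (a:ℂ) * b ^ 2 + S b * R b) (nhds 0) (nhds 2) := by
      have t1 : Tendsto (fun b : ℂ => 1 + (a:ℂ) * b ^ 2) (nhds 0) (nhds 1) := by
        have h0 : Continuous (fun b : ℂ => 1 + (a:ℂ) * b ^ 2) := by fun_prop
        simpa using h0.tendsto 0
      have := t1.add (hS.mul hR)
      norm_num at this
      exact this
    have t2 : Tendsto (fun b : ℂ => (2:ℂ) * S b) (nhds 0) (nhds 2) := by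
      simpa using hS.const_mul (2:ℂ)
    have := (t2.mul hR).mul h1
    norm_num at this
    convert this using 2 <;> ring
  have hg : Tendsto
      (fun b : ℂ => -((1 + (a:ℂ)) ^ 2 / (2 * S b * R b * (1 + (a:ℂ) * b ^ 2 + S b * R b))))
      (nhdsWithin 0 {(0 : ℂ)}ᶜ) (nhds (-((1 + (a : ℂ)) ^ 2 / 4))) := by
    have tc : Tendsto (fun _ : ℂ => (1 + (a:ℂ)) ^ 2) (nhds 0) (nhds ((1 + (a:ℂ)) ^ 2)) :=
      tendsto_const_nhds
    have := (tc.div hDen (by norm_num)).neg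
    exact this.mono_left nhdsWithin_le_nhds
  have hDne : ∀ᶠ b : ℂ in nhds 0, 2 * S b * R b * (1 + (a:ℂ) * b ^ 2 + S b * R b) ≠ 0 :=
    hDen.eventually_ne (by norm_num)
  have hSne : ∀ᶠ b : ℂ in nhds 0, S b ≠ 0 := hS.eventually_ne one_ne_zero
  have hRne : ∀ᶠ b : ℂ in nhds 0, R b ≠ 0 := hR.eventually_ne one_ne_zero
  have hfac : ∀ᶠ b : ℂ in nhds 0, 1 + (a:ℂ) * b ^ 2 + S b * R b ≠ 0 := by
    filter_upwards [hDne] with b h hb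
    exact h (by rw [hb]; ring)
  have heq : ∀ᶠ b : ℂ in nhdsWithin 0 {(0 : ℂ)}ᶜ,
      -((1 + (a:ℂ)) ^ 2 / (2 * S b * R b * (1 + (a:ℂ) * b ^ 2 + S b * R b)))
        = (Mnp a b).det / b ^ 2 := by
    have hmem : ∀ᶠ b : ℂ in nhdsWithin 0 {(0 : ℂ)}ᶜ, b ≠ 0 :=
      eventually_mem_nhdsWithin.mono fun b hb => hb
    filter_upwards [hSne.filter_mono nhdsWithin_le_nhds, hRne.filter_mono nhdsWithin_le_nhds,
      hfac.filter_mono nhdsWithin_le_nhds, hmem] with b hs hr hf hb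
    rw [det_Mnp]
    exact key_algebra a b (S b) (R b) hs hr hb hf (psqrt_sq _) (psqrt_sq _)
  refine ⟨hg.congr' heq, ?_, ?_⟩
  · rw [det_Mnp]; norm_num [psqrt]
  · intro h
    apply ha1
    have h2 := div_eq_zero_iff.mp (neg_eq_zero.mp h)
    rcases h2 with h2 | h2
    · exact pow_eq_zero_iff (by norm_num) |>.mp h2
    · norm_num at h2
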